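/- Let S be a Polish space, μ and μₙ Borel probability measures on S with μₙ converging weakly to μ. Let f, fₙ : S → ℝ be continuous with fₙ → f uniformly on compact subsets of S. Assume sup_n ∫ |fₙ| dμₙ < ∞ and lim_{α→∞} sup_n ∫ |fₙ|·1_{|fₙ| ≥ α} dμₙ = 0 (uniform integrability of the fₙ with respect to μₙ). Then ∫ fₙ dμₙ → ∫ f dμ. -/

import Mathlib

open MeasureTheory Filter Topology
open scoped ENNReal NNReal


noncomputable def myTrunc (α y : ℝ) : ℝ := max (min y α) (-α)

lemma myTrunc_lipschitz (α a b : ℝ) : |myTrunc α a - myTrunc α b| ≤ |a - b| := by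
  calc |max (min a α) (-α) - max (min b α) (-α)| ≤ |min a α - min b α| :=
        abs_max_sub_max_le_abs _ _ _
    _ ≤ max |a - b| |α - α| := abs_min_sub_min_le_max _ _ _ _
    _ = |a - b| := by simp

lemma abs_myTrunc_le (α y : ℝ) (hα : 0 ≤ α) : |myTrunc α y| ≤ α := by
  rw [abs_le]
  exact ⟨le_max_right _ _, max_le (min_le_right _ _) (by linarith)⟩

lemma myTrunc_eq_self {α y : ℝ} (h : |y| ≤ α) : myTrunc α y = y := by
  rw [abs_le] at h
  unfold myTrunc
  rw [min_eq_left h.2, max_eq_left h.1]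

lemma abs_sub_myTrunc_le (α y : ℝ) (hα : 0 ≤ α) :
    |y - myTrunc α y| ≤ if α ≤ |y| then |y| else 0 := by
  split_ifs with h
  · unfold myTrunc
    rcases le_total 0 y with hy | hy
    · rw [abs_of_nonneg hy] at h ⊢
      rw [min_eq_right h, max_eq_left (by linarith), abs_of_nonneg (by linarith)]
      linarith
    · rw [abs_of_nonpos hy] at h ⊢
      rw [min_eq_left (by linarith), max_eq_right (by linarith),
        abs_of_nonpos (by linarith)]
      linarith
  · push_neg at h
    rw [myTrunc_eq_self h.le]
    simp

lemma abs_sub_myTrunc_le_abs (α y : ℝ) (hα : 0 ≤ α) : |y - myTrunc α y| ≤ |y| := by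
  refine (abs_sub_myTrunc_le α y hα).trans ?_
  split_ifs <;> simp [abs_nonneg]

lemma continuous_myTrunc {S' : Type*} [TopologicalSpace S'] (α : ℝ) {f : S' → ℝ}
    (hf : Continuous f) : Continuous fun x => myTrunc α (f x) :=
  (hf.min continuous_const).max continuous_const


lemma tight_aux {S : Type*} [MetricSpace S] [MeasurableSpace S] [OpensMeasurableSpace S]
    (ν : Measure S) [IsProbabilityMeasure ν] {r : ℝ} (hr : 0 < r) {η : ℝ≥0∞} (hη : 0 < η)
    (u : ℕ → S) (hu : DenseRange u) :
    ∀ᶠ m in atTop, ν (⋃ i ∈ Finset.range m, Metric.ball (u i) r)ᶜ < η := by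
  set V : ℕ → Set S := fun m => ⋃ i ∈ Finset.range m, Metric.ball (u i) r with hV
  have hopen : ∀ m, IsOpen (V m) := fun m =>
    isOpen_biUnion fun i _ => Metric.isOpen_ball
  have hmono : Monotone V := by
    intro a b hab x hx
    simp only [hV, Set.mem_iUnion, Finset.mem_range] at hx ⊢
    obtain ⟨i, hi, hxi⟩ := hx
    exact ⟨i, lt_of_lt_of_le hi hab, hxi⟩
  have hunion : (⋃ m, V m) = Set.univ := by
    ext x
    simp only [Set.mem_iUnion, Set.mem_univ, iff_true, hV, Finset.mem_range]
    obtain ⟨i, hi⟩ := hu.exists_dist_lt x hr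
    exact ⟨i + 1, i, Nat.lt_succ_self i, by simpa [Metric.mem_ball, dist_comm] using hi⟩
  have htend : Tendsto (fun m => ν (V m)ᶜ) atTop (𝓝 (ν (⋂ m, (V m)ᶜ))) :=
    tendsto_measure_iInter_atTop
      (fun m => ((hopen m).isClosed_compl.measurableSet).nullMeasurableSet)
      (fun a b hab => Set.compl_subset_compl.mpr (hmono hab))
      ⟨0, measure_ne_top ν _⟩
  have : (⋂ m, (V m)ᶜ) = ∅ := by
    rw [← Set.compl_iUnion, hunion, Set.compl_univ]
  rw [this, measure_empty] at htend
  exact htend.eventually_lt_const hη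

lemma exists_finite_cover {S : Type*} [MetricSpace S] [MeasurableSpace S] [OpensMeasurableSpace S]
    (P : ℕ → ProbabilityMeasure S) (Q : ProbabilityMeasure S)
    (hP : Tendsto P atTop (𝓝 Q)) {r : ℝ} (hr : 0 < r) {η : ℝ≥0∞} (hη : 0 < η)
    (u : ℕ → S) (hu : DenseRange u) :
    ∃ m : ℕ, (Q : Measure S) (⋃ i ∈ Finset.range m, Metric.ball (u i) r)ᶜ ≤ η ∧
      ∀ n, (P n : Measure S) (⋃ i ∈ Finset.range m, Metric.ball (u i) r)ᶜ ≤ η := by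
  rcases le_or_gt 1 η with hη1 | hη1
  · exact ⟨0, le_trans prob_le_one hη1, fun n => le_trans prob_le_one hη1⟩
  set V : ℕ → Set S := fun m => ⋃ i ∈ Finset.range m, Metric.ball (u i) r with hV
  have hopen : ∀ m, IsOpen (V m) := fun m => isOpen_biUnion fun i _ => Metric.isOpen_ball
  have hmono : Monotone V := by
    intro a b hab x hx
    simp only [hV, Set.mem_iUnion, Finset.mem_range] at hx ⊢
    obtain ⟨i, hi, hxi⟩ := hx
    exact ⟨i, lt_of_lt_of_le hi hab, hxi⟩
  have hhalf : (0:ℝ≥0∞) < η / 2 := ENNReal.half_pos hη.ne'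
  obtain ⟨m₀, hm₀⟩ := (tight_aux (Q : Measure S) hr hhalf u hu).exists
  have hlim : (Q : Measure S) (V m₀) ≤ atTop.liminf fun n => (P n : Measure S) (V m₀) :=
    ProbabilityMeasure.le_liminf_measure_open_of_tendsto hP (hopen m₀)
  have hQ2 := measure_add_measure_compl (μ := (Q : Measure S)) (hopen m₀).measurableSet
  rw [measure_univ] at hQ2
  have hQV : 1 ≤ (Q : Measure S) (V m₀) + η / 2 :=
    hQ2 ▸ add_le_add le_rfl hm₀.le
  have hQ0 : (Q : Measure S) (V m₀) ≠ 0 := by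
    intro h0
    rw [h0, zero_add] at hQV
    exact absurd (hQV.trans (ENNReal.half_le_self)) (not_le.mpr hη1)
  have hev : ∀ᶠ n in atTop, (P n : Measure S) (V m₀)ᶜ ≤ η := by
    have hlt : (Q : Measure S) (V m₀) - η / 2 <
        atTop.liminf fun n => (P n : Measure S) (V m₀) :=
      lt_of_lt_of_le (ENNReal.sub_lt_self (measure_ne_top _ _) hQ0 hhalf.ne') hlim
    filter_upwards [eventually_lt_of_lt_liminf hlt] with n hn
    have h1 : 1 ≤ (P n : Measure S) (V m₀) + η := by
      calc (1:ℝ≥0∞) ≤ (Q : Measure S) (V m₀) + η / 2 := hQV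
        _ ≤ ((Q : Measure S) (V m₀) - η / 2 + η / 2) + η / 2 := add_le_add le_tsub_add le_rfl
        _ = ((Q : Measure S) (V m₀) - η / 2) + η := by rw [add_assoc, ENNReal.add_halves]
        _ ≤ (P n : Measure S) (V m₀) + η := add_le_add hn.le le_rfl
    have h2 := measure_add_measure_compl (μ := (P n : Measure S)) (hopen m₀).measurableSet
    rw [measure_univ] at h2
    have h3 : (P n : Measure S) (V m₀)ᶜ = 1 - (P n : Measure S) (V m₀) :=
      ENNReal.eq_sub_of_add_eq (measure_ne_top _ _) (by rw [add_comm]; exact h2)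
    rw [h3, tsub_le_iff_right, add_comm]
    exact h1
  obtain ⟨N, hN⟩ := hev.exists_forall_of_atTop
  have hPn : ∀ k ∈ Finset.range N, ∀ᶠ m in atTop, (P k : Measure S) (V m)ᶜ < η :=
    fun k _ => tight_aux _ hr hη u hu
  obtain ⟨m, hm_ge, hm_all⟩ :=
    ((eventually_ge_atTop m₀).and (Filter.eventually_all_finset (Finset.range N)
      |>.mpr hPn)).exists
  refine ⟨m, ?_, fun n => ?_⟩
  · exact le_trans (measure_mono (Set.compl_subset_compl.mpr (hmono hm_ge)))
      (hm₀.le.trans ENNReal.half_le_self)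
  · rcases lt_or_ge n N with hn | hn
    · exact (hm_all n (Finset.mem_range.mpr hn)).le
    · exact le_trans (measure_mono (Set.compl_subset_compl.mpr (hmono hm_ge))) (hN n hn)



lemma tight_of_tendsto {S : Type*} [MetricSpace S] [CompleteSpace S]
    [TopologicalSpace.SeparableSpace S] [MeasurableSpace S] [OpensMeasurableSpace S]
    (P : ℕ → ProbabilityMeasure S) (Q : ProbabilityMeasure S)
    (hP : Tendsto P atTop (𝓝 Q)) {ε : ℝ≥0∞} (hε : 0 < ε) :
    ∃ K : Set S, IsCompact K ∧ (Q : Measure S) Kᶜ ≤ ε ∧ ∀ n, (P n : Measure S) Kᶜ ≤ ε := by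
  rcases eq_or_ne ε ∞ with rfl | hεtop
  · exact ⟨∅, isCompact_empty, le_top, fun n => le_top⟩
  have hne : Nonempty S := by
    by_contra h
    have h0 : (Set.univ : Set S) = ∅ := Set.univ_eq_empty_iff.mpr (not_nonempty_iff.mp h)
    have h1 := measure_univ (μ := (Q : Measure S))
    rw [h0, measure_empty] at h1
    exact zero_ne_one h1
  obtain ⟨u, hu⟩ := TopologicalSpace.exists_dense_seq S
  have hηpos : ∀ k : ℕ, (0:ℝ≥0∞) < ε * 2⁻¹ ^ (k+1) := fun k =>
    ENNReal.mul_pos hε.ne' (by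
      apply pow_ne_zero
      simp)
  have hrpos : ∀ k : ℕ, (0:ℝ) < 1 / (k+1) := fun k => by positivity
  choose m hmQ hmP using fun k : ℕ => exists_finite_cover P Q hP (hrpos k) (hηpos k) u hu
  set W : ℕ → Set S := fun k => ⋃ i ∈ Finset.range (m k), Metric.ball (u i) (1/(k+1)) with hW
  have hWsub : ∀ k, closure (W k) ⊆ ⋃ i ∈ Finset.range (m k), Metric.closedBall (u i) (1/(k+1)) := by
    intro k
    apply closure_minimal
    · exact Set.iUnion₂_mono fun i _ => Metric.ball_subset_closedBall
    · exact (Finset.range (m k)).finite_toSet.isClosed_biUnion fun i _ => Metric.isClosed_closedBall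
  refine ⟨⋂ k, closure (W k), ?_, ?_, ?_⟩
  · apply TotallyBounded.isCompact_of_isClosed
    · rw [Metric.totallyBounded_iff]
      intro δ hδ
      obtain ⟨k, hk⟩ := exists_nat_one_div_lt hδ
      refine ⟨u '' (Finset.range (m k)), (Finset.range (m k)).finite_toSet.image u, ?_⟩
      intro x hx
      have hx' := hWsub k (Set.mem_iInter.mp hx k)
      simp only [Set.mem_iUnion, Finset.mem_range] at hx'
      obtain ⟨i, hi, hxi⟩ := hx'
      simp only [Set.mem_iUnion]
      refine ⟨u i, Set.mem_image_of_mem u (by simpa using hi), ?_⟩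
      rw [Metric.mem_ball]
      calc dist x (u i) ≤ 1/(k+1) := Metric.mem_closedBall.mp hxi
        _ < δ := by exact_mod_cast hk
    · exact isClosed_iInter fun k => isClosed_closure
  · calc (Q : Measure S) (⋂ k, closure (W k))ᶜ
        = (Q : Measure S) (⋃ k, (closure (W k))ᶜ) := by rw [Set.compl_iInter]
      _ ≤ ∑' k, (Q : Measure S) (closure (W k))ᶜ := measure_iUnion_le _
      _ ≤ ∑' k, ε * 2⁻¹ ^ (k+1) := ENNReal.tsum_le_tsum fun k =>
          le_trans (measure_mono (Set.compl_subset_compl.mpr subset_closure)) (hmQ k)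
      _ = ε := by
          rw [ENNReal.tsum_mul_left, ENNReal.tsum_geometric_add_one, ENNReal.one_sub_inv_two,
            inv_inv, ENNReal.inv_mul_cancel two_ne_zero ENNReal.ofNat_ne_top, mul_one]
  · intro n
    calc (P n : Measure S) (⋂ k, closure (W k))ᶜ
        = (P n : Measure S) (⋃ k, (closure (W k))ᶜ) := by rw [Set.compl_iInter]
      _ ≤ ∑' k, (P n : Measure S) (closure (W k))ᶜ := measure_iUnion_le _
      _ ≤ ∑' k, ε * 2⁻¹ ^ (k+1) := ENNReal.tsum_le_tsum fun k =>
          le_trans (measure_mono (Set.compl_subset_compl.mpr subset_closure)) (hmP k n)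
      _ = ε := by
          rw [ENNReal.tsum_mul_left, ENNReal.tsum_geometric_add_one, ENNReal.one_sub_inv_two,
            inv_inv, ENNReal.inv_mul_cancel two_ne_zero ENNReal.ofNat_ne_top, mul_one]

theorem tendsto_integral_of_weak_conv_unif_integrable
    {S : Type*} [MetricSpace S] [CompleteSpace S]
    [TopologicalSpace.SeparableSpace S] [MeasurableSpace S] [BorelSpace S]
    (μ : Measure S) (μs : ℕ → Measure S)
    [IsProbabilityMeasure μ] (hprob : ∀ n, IsProbabilityMeasure (μs n))
    (hweak : ∀ g : BoundedContinuousFunction S ℝ,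
      Tendsto (fun n => ∫ x, g x ∂(μs n)) atTop (nhds (∫ x, g x ∂μ)))
    (f : S → ℝ) (fs : ℕ → S → ℝ)
    (hf : Continuous f) (hfs : ∀ n, Continuous (fs n))
    (hunif : ∀ K : Set S, IsCompact K →
      TendstoUniformlyOn (fun n x => fs n x) f atTop K)
    (hintegrable : ∀ n, Integrable (fs n) (μs n))
    (hsup : ∃ M : ℝ, ∀ n, ∫ x, |fs n x| ∂(μs n) ≤ M)
    (htail : ∀ δ > (0 : ℝ), ∃ α₀ : ℝ, ∀ α ≥ α₀, ∀ n,
      ∫ x, (if α ≤ |fs n x| then |fs n x| else 0) ∂(μs n) ≤ δ) :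
    Tendsto (fun n => ∫ x, fs n x ∂(μs n)) atTop (nhds (∫ x, f x ∂μ)) := by
  obtain ⟨M, hM⟩ := hsup
  set P : ℕ → ProbabilityMeasure S := fun n => ⟨μs n, hprob n⟩ with hPdef
  set Q : ProbabilityMeasure S := ⟨μ, ‹_›⟩ with hQdef
  have hP : Tendsto P atTop (𝓝 Q) :=
    ProbabilityMeasure.tendsto_iff_forall_integral_tendsto.mpr hweak
  have htight : ∀ ε' : ℝ, 0 < ε' → ∃ K : Set S, IsCompact K ∧
      μ Kᶜ ≤ ENNReal.ofReal ε' ∧ ∀ n, μs n Kᶜ ≤ ENNReal.ofReal ε' := by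
    intro ε' hε'
    obtain ⟨K, hK, h1, h2⟩ := tight_of_tendsto P Q hP (ENNReal.ofReal_pos.mpr hε')
    exact ⟨K, hK, h1, h2⟩
  -- the tail integrand is integrable
  have htail_int : ∀ n (β : ℝ),
      Integrable (fun x => if β ≤ |fs n x| then |fs n x| else 0) (μs n) := by
    intro n β
    have hmeas : MeasurableSet {x | β ≤ |fs n x|} :=
      (isClosed_le continuous_const (hfs n).abs).measurableSet
    have heq : (fun x => if β ≤ |fs n x| then |fs n x| else 0)
        = Set.indicator {x | β ≤ |fs n x|} (fun x => |fs n x|) := by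
      ext x
      by_cases h : β ≤ |fs n x| <;> simp [Set.indicator_apply, h]
    rw [heq]
    exact ((hintegrable n).abs).indicator hmeas
  -- integrability of f w.r.t. μ
  have hfint : Integrable f μ := by
    have hgc : ∀ j : ℕ, Continuous fun x => min |f x| (j:ℝ) :=
      fun j => hf.abs.min continuous_const
    set gj : ℕ → BoundedContinuousFunction S ℝ := fun j =>
      BoundedContinuousFunction.ofNormedAddCommGroup _ (hgc j) (j:ℝ) (fun x => by
        rw [Real.norm_eq_abs, abs_of_nonneg (le_min (abs_nonneg _) (Nat.cast_nonneg j))]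
        exact min_le_right _ _) with hgj
    have hgj_coe : ∀ j x, gj j x = min |f x| (j:ℝ) := fun j x => rfl
    have hbound : ∀ j : ℕ, ∫ x, (gj j) x ∂μ ≤ M := by
      intro j
      refine le_of_forall_pos_le_add ?_
      intro c hc
      obtain ⟨K, hK, hKμ, hKμs⟩ := htight (c/(2*((j:ℝ)+1))) (by positivity)
      have hunifK := hunif K hK
      rw [Metric.tendstoUniformlyOn_iff] at hunifK
      have hev : ∀ᶠ n in atTop, ∫ x, (gj j) x ∂(μs n) ≤ M + c := by
        filter_upwards [hunifK (c/2) (by positivity)] with n hn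
        have hint1 : Integrable (fun x => |fs n x| + c/2) (μs n) :=
          (hintegrable n).abs.add (integrable_const _)
        have hKc_meas : MeasurableSet K := hK.measurableSet
        have hsplit : ∫ x, (gj j) x ∂(μs n)
            = (∫ x in K, (gj j) x ∂(μs n)) + ∫ x in Kᶜ, (gj j) x ∂(μs n) :=
          (integral_add_compl hKc_meas ((gj j).integrable (μs n))).symm
        have hbK : ∫ x in K, (gj j) x ∂(μs n) ≤ ∫ x, (|fs n x| + c/2) ∂(μs n) := by
          refine le_trans (setIntegral_mono_on ((gj j).integrable (μs n)).integrableOn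
            hint1.integrableOn hKc_meas ?_) (setIntegral_le_integral hint1 ?_)
          · intro x hx
            rw [hgj_coe]
            have h1 : |f x| ≤ |fs n x| + |f x - fs n x| := by
              calc |f x| = |fs n x + (f x - fs n x)| := by ring_nf
                _ ≤ |fs n x| + |f x - fs n x| := abs_add_le _ _
            have h2 : |f x - fs n x| < c/2 := by
              rw [← Real.dist_eq]; exact hn x hx
            calc min |f x| (j:ℝ) ≤ |f x| := min_le_left _ _
              _ ≤ |fs n x| + c/2 := by linarith
          · filter_upwards with x
            positivity
        have hbKc : ∫ x in Kᶜ, (gj j) x ∂(μs n) ≤ c/2 := by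
          have h1 : ∫ x in Kᶜ, (gj j) x ∂(μs n) ≤ ∫ x in Kᶜ, (j:ℝ) ∂(μs n) := by
            refine setIntegral_mono_on ((gj j).integrable (μs n)).integrableOn
              (integrableOn_const (measure_lt_top _ _).ne) hKc_meas.compl ?_
            intro x _
            exact min_le_right _ _
          have h2 : ∫ x in Kᶜ, (j:ℝ) ∂(μs n) = ((μs n) Kᶜ).toReal * j := by
            rw [setIntegral_const, smul_eq_mul, measureReal_def]
          have h3 : ((μs n) Kᶜ).toReal ≤ c/(2*((j:ℝ)+1)) :=
            ENNReal.toReal_le_of_le_ofReal (by positivity) (hKμs n)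
          have h4 : ((μs n) Kᶜ).toReal * j ≤ c/(2*((j:ℝ)+1)) * j := by
            apply mul_le_mul_of_nonneg_right h3 (Nat.cast_nonneg j)
          have h5 : c/(2*((j:ℝ)+1)) * j ≤ c/2 := by
            rw [div_mul_eq_mul_div, div_le_div_iff₀ (by positivity) (by norm_num)]
            ring_nf
            nlinarith [Nat.cast_nonneg (α := ℝ) j, hc.le]
          linarith [h1, h2 ▸ h4.trans h5]
        have hint2 : ∫ x, (|fs n x| + c/2) ∂(μs n) = (∫ x, |fs n x| ∂(μs n)) + c/2 := by
          rw [integral_add (hintegrable n).abs (integrable_const _), integral_const]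
          simp [(hprob n).measure_univ]
        calc ∫ x, (gj j) x ∂(μs n)
            = (∫ x in K, (gj j) x ∂(μs n)) + ∫ x in Kᶜ, (gj j) x ∂(μs n) := hsplit
          _ ≤ (∫ x, (|fs n x| + c/2) ∂(μs n)) + c/2 := add_le_add hbK hbKc
          _ = (∫ x, |fs n x| ∂(μs n)) + c/2 + c/2 := by rw [hint2]
          _ ≤ M + c := by linarith [hM n]
      exact le_of_tendsto (hweak (gj j)) hev
    have hM0 : 0 ≤ M := le_trans (integral_nonneg fun x => abs_nonneg _) (hM 0)
    have hlin : ∀ j : ℕ, ∫⁻ x, ENNReal.ofReal (min |f x| (j:ℝ)) ∂μ ≤ ENNReal.ofReal M := by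
      intro j
      simp only [← hgj_coe]
      rw [← ofReal_integral_eq_lintegral_ofReal ((gj j).integrable μ)
        (Filter.Eventually.of_forall fun x => le_min (abs_nonneg _) (Nat.cast_nonneg j))]
      exact ENNReal.ofReal_le_ofReal (hbound j)
    have hmon : Tendsto (fun j : ℕ => ∫⁻ x, ENNReal.ofReal (min |f x| (j:ℝ)) ∂μ) atTop
        (𝓝 (∫⁻ x, ‖f x‖₊ ∂μ)) := by
      apply lintegral_tendsto_of_tendsto_of_monotone
      · exact fun j => ((hgc j).measurable.ennreal_ofReal).aemeasurable
      · filter_upwards with x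
        intro a b hab
        exact ENNReal.ofReal_le_ofReal (min_le_min le_rfl (Nat.cast_le.mpr hab))
      · filter_upwards with x
        have : (‖f x‖₊ : ℝ≥0∞) = ENNReal.ofReal |f x| := by
          rw [← Real.norm_eq_abs]; exact (ofReal_norm (f x)).symm
        rw [this]
        refine Tendsto.congr' ?_ tendsto_const_nhds
        filter_upwards [eventually_ge_atTop ⌈|f x|⌉₊] with j hj
        rw [min_eq_left (le_trans (Nat.le_ceil _) (Nat.cast_le.mpr hj))]
    have hfin : ∫⁻ x, ‖f x‖₊ ∂μ ≤ ENNReal.ofReal M :=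
      le_of_tendsto hmon (Filter.Eventually.of_forall hlin)
    exact ⟨hf.aestronglyMeasurable, lt_of_le_of_lt hfin ENNReal.ofReal_lt_top⟩
  -- tail of f w.r.t. μ vanishes
  have htailf : Tendsto (fun j : ℕ => ∫ x, |f x - myTrunc (j:ℝ) (f x)| ∂μ) atTop (𝓝 0) := by
    have := tendsto_integral_of_dominated_convergence (μ := μ)
      (F := fun (j : ℕ) x => |f x - myTrunc (j:ℝ) (f x)|) (f := fun _ => (0:ℝ))
      (bound := fun x => |f x|)
      (fun j => ((hf.sub (continuous_myTrunc _ hf)).abs).aestronglyMeasurable)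
      hfint.abs
      (fun j => Filter.Eventually.of_forall fun x => by
        rw [Real.norm_eq_abs, abs_abs]
        exact abs_sub_myTrunc_le_abs _ _ (Nat.cast_nonneg j))
      (Filter.Eventually.of_forall fun x => by
        refine Tendsto.congr' ?_ tendsto_const_nhds
        filter_upwards [eventually_ge_atTop ⌈|f x|⌉₊] with j hj
        rw [myTrunc_eq_self (le_trans (Nat.le_ceil _) (Nat.cast_le.mpr hj)), sub_self, abs_zero])
    simpa using this
  -- final epsilon argument
  rw [Metric.tendsto_atTop]
  intro ε hε
  have hδ : 0 < ε/8 := by positivity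
  obtain ⟨α₀, hα₀⟩ := htail (ε/8) hδ
  have hev : ∀ᶠ j : ℕ in atTop, ∫ x, |f x - myTrunc (j:ℝ) (f x)| ∂μ < ε/8 :=
    htailf.eventually_lt_const hδ
  obtain ⟨j, hj1, hj2⟩ := (hev.and (eventually_ge_atTop ⌈max α₀ 1⌉₊)).exists
  have hjmax : max α₀ 1 ≤ (j:ℝ) := le_trans (Nat.le_ceil _) (Nat.cast_le.mpr hj2)
  set α : ℝ := (j:ℝ) with hαdef
  have hjα₀ : α₀ ≤ α := le_trans (le_max_left _ _) hjmax
  have hα1 : 1 ≤ α := le_trans (le_max_right _ _) hjmax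
  have hα0 : 0 < α := lt_of_lt_of_le one_pos hα1
  obtain ⟨K, hK, hKμ, hKμs⟩ := htight ((ε/8)/(2*α)) (by positivity)
  have hunifK := hunif K hK
  rw [Metric.tendstoUniformlyOn_iff] at hunifK
  obtain ⟨N₁, hN₁⟩ := (hunifK (ε/8) hδ).exists_forall_of_atTop
  set g : BoundedContinuousFunction S ℝ :=
    BoundedContinuousFunction.ofNormedAddCommGroup (fun x => myTrunc α (f x))
      (continuous_myTrunc α hf) α
      (fun x => by rw [Real.norm_eq_abs]; exact abs_myTrunc_le α (f x) hα0.le) with hgdef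
  have hg := hweak g
  rw [Metric.tendsto_atTop] at hg
  obtain ⟨N₂, hN₂⟩ := hg (ε/8) hδ
  refine ⟨max N₁ N₂, fun n hn => ?_⟩
  set gn : BoundedContinuousFunction S ℝ :=
    BoundedContinuousFunction.ofNormedAddCommGroup (fun x => myTrunc α (fs n x))
      (continuous_myTrunc α (hfs n)) α
      (fun x => by rw [Real.norm_eq_abs]; exact abs_myTrunc_le α (fs n x) hα0.le) with hgndef
  have hTn : Integrable (fun x => myTrunc α (fs n x)) (μs n) := gn.integrable (μs n)
  have hTf_n : Integrable (fun x => myTrunc α (f x)) (μs n) := g.integrable (μs n)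
  have hTf_μ : Integrable (fun x => myTrunc α (f x)) μ := g.integrable μ
  have key1 : |(∫ x, fs n x ∂μs n) - ∫ x, myTrunc α (fs n x) ∂μs n| ≤ ε/8 := by
    rw [← integral_sub (hintegrable n) hTn]
    calc |∫ x, (fs n x - myTrunc α (fs n x)) ∂μs n|
        ≤ ∫ x, |fs n x - myTrunc α (fs n x)| ∂μs n := by
          simpa [Real.norm_eq_abs] using norm_integral_le_integral_norm (μ := μs n)
            (f := fun x => fs n x - myTrunc α (fs n x))
      _ ≤ ∫ x, (if α ≤ |fs n x| then |fs n x| else 0) ∂μs n :=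
          integral_mono ((hintegrable n).sub hTn).abs (htail_int n α)
            (fun x => abs_sub_myTrunc_le α (fs n x) hα0.le)
      _ ≤ ε/8 := hα₀ α hjα₀ n
  have habs_int : Integrable (fun x => |myTrunc α (fs n x) - myTrunc α (f x)|) (μs n) :=
    (hTn.sub hTf_n).abs
  have htoK : ((μs n) K).toReal ≤ 1 := by
    rw [← ENNReal.toReal_one]
    exact ENNReal.toReal_mono ENNReal.one_ne_top prob_le_one
  have key2 : |(∫ x, myTrunc α (fs n x) ∂μs n) - ∫ x, myTrunc α (f x) ∂μs n| ≤ ε/8 + ε/8 := by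
    rw [← integral_sub hTn hTf_n]
    have h0 : |∫ x, (myTrunc α (fs n x) - myTrunc α (f x)) ∂μs n|
        ≤ ∫ x, |myTrunc α (fs n x) - myTrunc α (f x)| ∂μs n := by
      simpa [Real.norm_eq_abs] using norm_integral_le_integral_norm (μ := μs n)
        (f := fun x => myTrunc α (fs n x) - myTrunc α (f x))
    have hsplit : ∫ x, |myTrunc α (fs n x) - myTrunc α (f x)| ∂μs n
        = (∫ x in K, |myTrunc α (fs n x) - myTrunc α (f x)| ∂μs n)
          + ∫ x in Kᶜ, |myTrunc α (fs n x) - myTrunc α (f x)| ∂μs n :=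
      (integral_add_compl hK.measurableSet habs_int).symm
    have hbK : ∫ x in K, |myTrunc α (fs n x) - myTrunc α (f x)| ∂μs n ≤ ε/8 := by
      have h1 : ∫ x in K, |myTrunc α (fs n x) - myTrunc α (f x)| ∂μs n
          ≤ ∫ _x in K, (ε/8) ∂μs n := by
        refine setIntegral_mono_on habs_int.integrableOn
          (integrableOn_const (measure_lt_top _ _).ne) hK.measurableSet ?_
        intro x hx
        refine le_of_lt (lt_of_le_of_lt (myTrunc_lipschitz α (fs n x) (f x)) ?_)
        rw [abs_sub_comm, ← Real.dist_eq]
        exact hN₁ n (le_trans (le_max_left _ _) hn) x hx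
      rw [setIntegral_const, smul_eq_mul, measureReal_def] at h1
      refine h1.trans ?_
      nlinarith [htoK, ENNReal.toReal_nonneg (a := (μs n) K)]
    have hbKc : ∫ x in Kᶜ, |myTrunc α (fs n x) - myTrunc α (f x)| ∂μs n ≤ ε/8 := by
      have h1 : ∫ x in Kᶜ, |myTrunc α (fs n x) - myTrunc α (f x)| ∂μs n
          ≤ ∫ _x in Kᶜ, (2*α) ∂μs n := by
        refine setIntegral_mono_on habs_int.integrableOn
          (integrableOn_const (measure_lt_top _ _).ne) hK.measurableSet.compl ?_
        intro x _
        calc |myTrunc α (fs n x) - myTrunc α (f x)|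
            ≤ |myTrunc α (fs n x)| + |myTrunc α (f x)| := abs_sub _ _
          _ ≤ 2*α := by
              linarith [abs_myTrunc_le α (fs n x) hα0.le, abs_myTrunc_le α (f x) hα0.le]
      rw [setIntegral_const, smul_eq_mul, measureReal_def] at h1
      have h3 : ((μs n) Kᶜ).toReal ≤ (ε/8)/(2*α) :=
        ENNReal.toReal_le_of_le_ofReal (by positivity) (hKμs n)
      have h4 : ((μs n) Kᶜ).toReal * (2*α) ≤ (ε/8)/(2*α) * (2*α) :=
        mul_le_mul_of_nonneg_right h3 (by positivity)
      have h5 : (ε/8)/(2*α) * (2*α) = ε/8 := by field_simp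
      linarith
    linarith
  have key3 : |(∫ x, myTrunc α (f x) ∂μs n) - ∫ x, myTrunc α (f x) ∂μ| < ε/8 := by
    have h := hN₂ n (le_trans (le_max_right _ _) hn)
    rw [Real.dist_eq] at h
    exact h
  have key4 : |(∫ x, myTrunc α (f x) ∂μ) - ∫ x, f x ∂μ| < ε/8 := by
    rw [← integral_sub hTf_μ hfint]
    calc |∫ x, (myTrunc α (f x) - f x) ∂μ|
        ≤ ∫ x, |myTrunc α (f x) - f x| ∂μ := by
          simpa [Real.norm_eq_abs] using norm_integral_le_integral_norm (μ := μ)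
            (f := fun x => myTrunc α (f x) - f x)
      _ = ∫ x, |f x - myTrunc α (f x)| ∂μ := by simp_rw [abs_sub_comm]
      _ < ε/8 := hj1
  rw [Real.dist_eq]
  have t1 := abs_sub_le (∫ x, fs n x ∂μs n) (∫ x, myTrunc α (fs n x) ∂μs n) (∫ x, f x ∂μ)
  have t2 := abs_sub_le (∫ x, myTrunc α (fs n x) ∂μs n) (∫ x, myTrunc α (f x) ∂μs n)
    (∫ x, f x ∂μ)
  have t3 := abs_sub_le (∫ x, myTrunc α (f x) ∂μs n) (∫ x, myTrunc α (f x) ∂μ) (∫ x, f x ∂μ)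
  linarith
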